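/- With T = L + M, R = K + M as above, R is a Noetherian ring if and only if T is Noetherian, K is a field, and [L:K] < ∞. -/

import Mathlib

section Setup

variable {T : Type*} [CommRing T] [IsDomain T]

/-- The subring `K + M` of `T`, for a subring `K` and an ideal `M` of `T`. -/
def ringR (K : Subring T) (M : Ideal T) : Subring T where
  carrier := {t | ∃ k ∈ K, ∃ m ∈ M, t = k + m}
  one_mem' := ⟨1, K.one_mem, 0, M.zero_mem, by ring⟩
  zero_mem' := ⟨0, K.zero_mem, 0, M.zero_mem, by ring⟩
  add_mem' := by
    rintro a b ⟨k1, hk1, m1, hm1, rfl⟩ ⟨k2, hk2, m2, hm2, rfl⟩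
    exact ⟨k1 + k2, K.add_mem hk1 hk2, m1 + m2, M.add_mem hm1 hm2, by ring⟩
  neg_mem' := by
    rintro a ⟨k, hk, m, hm, rfl⟩
    exact ⟨-k, K.neg_mem hk, -m, M.neg_mem hm, by ring⟩
  mul_mem' := by
    rintro a b ⟨k1, hk1, m1, hm1, rfl⟩ ⟨k2, hk2, m2, hm2, rfl⟩
    refine ⟨k1 * k2, K.mul_mem hk1 hk2, k1 * m2 + m1 * k2 + m1 * m2, ?_, by ring⟩
    exact M.add_mem (M.add_mem (M.mul_mem_left _ hm2) (M.mul_mem_right _ hm1))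
      (M.mul_mem_left _ hm2)

theorem K_le_ringR (K : Subring T) (M : Ideal T) : K ≤ ringR K M :=
  fun k hk => ⟨k, hk, 0, M.zero_mem, (add_zero k).symm⟩

/-- An ideal `A` of `T`, viewed as a module over a subring `S` of `T`. -/
def idealAsMod (S : Subring T) (A : Ideal T) : Submodule ↥S T where
  carrier := A
  add_mem' := fun ha hb => A.add_mem ha hb
  zero_mem' := A.zero_mem
  smul_mem' := fun r a ha => A.mul_mem_left (r : T) ha

/-- The subring `L` of `T` is a field. -/
def IsFieldSub (L : Subring T) : Prop := ∀ x ∈ L, x ≠ 0 → ∃ y ∈ L, x * y = 1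

/-- `T = L ⊕ M` as additive groups: `L` is a retract of `T` with maximal ideal `M`. -/
def DirectSumDecomp (L : Subring T) (M : Ideal T) : Prop :=
  (∀ t : T, ∃ l ∈ L, ∃ m ∈ M, t = l + m) ∧ ∀ x ∈ L, x ∈ M → x = 0

/-- `L` is the field of fractions of `K` (inside `T`). -/
def IsFracOf (K L : Subring T) : Prop :=
  ∀ l ∈ L, ∃ a ∈ K, ∃ b ∈ K, b ≠ 0 ∧ l * b = a

/-- The module structure on a subring over a smaller subring. -/
noncomputable def modOfLE {K L : Subring T} (h : K ≤ L) : Module ↥K ↥L :=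
  ((Subring.inclusion h).toAlgebra).toModule

/-- `T` localized at the prime `M` is a valuation domain. -/
def ValAtPrime (M : Ideal T) (hp : M.IsPrime) : Prop :=
  @ValuationRing (@Localization.AtPrime T _ M hp) _
    (@IsLocalization.isDomain_of_local_atPrime T _ _ M hp)

/-- A Prüfer domain: every nonzero finitely generated ideal is invertible. -/
def IsPruferDomain (A : Type*) [CommRing A] [IsDomain A] : Prop :=
  ∀ I : Ideal A, I ≠ ⊥ → I.FG →
    IsUnit (I : FractionalIdeal (nonZeroDivisors A) (FractionRing A))

/-- A GCD domain: any two nonzero elements admit a greatest common divisor. -/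
def IsGCDDomain (A : Type*) [CommRing A] [IsDomain A] : Prop :=
  ∀ a b : A, a ≠ 0 → b ≠ 0 →
    ∃ g : A, g ∣ a ∧ g ∣ b ∧ ∀ c : A, c ∣ a → c ∣ b → c ∣ g

/-- The algebra structure of the fraction field of `T` over a subring of `T`. -/
noncomputable def algFrac (S : Subring T) : Algebra ↥S (FractionRing T) :=
  ((algebraMap T (FractionRing T)).comp S.subtype).toAlgebra

end Setup

section Proof

open Submodule

variable {T : Type*} [CommRing T] [IsDomain T] {L K : Subring T} {M : Ideal T}

theorem M_le_ringR (K : Subring T) (M : Ideal T) {m : T} (hm : m ∈ M) : m ∈ ringR K M :=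
  ⟨0, K.zero_mem, m, hm, by ring⟩

theorem decompL_unique (hLM : DirectSumDecomp L M) {l l' m m' : T} (hl : l ∈ L) (hl' : l' ∈ L)
    (hm : m ∈ M) (hm' : m' ∈ M) (h : l + m = l' + m') : l = l' := by
  have h1 : l - l' ∈ L := L.sub_mem hl hl'
  have h2 : l - l' ∈ M := by
    have he : l - l' = m' - m := by linear_combination h
    rw [he]; exact M.sub_mem hm' hm
  exact sub_eq_zero.mp (hLM.2 _ h1 h2)

theorem span_subring_mono {K R' : Subring T} (h : K ≤ R') {s : Set T} {x : T}
    (hx : x ∈ Submodule.span ↥K s) : x ∈ Submodule.span ↥R' s := by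
  induction hx using Submodule.span_induction with
  | mem y hy => exact subset_span hy
  | zero => exact zero_mem _
  | add a b _ _ ha hb => exact add_mem ha hb
  | smul k a _ ha =>
    have he : k • a = (⟨(k : T), h k.2⟩ : ↥R') • a := rfl
    rw [he]; exact smul_mem _ _ ha

theorem key_noetherian (hLM : DirectSumDecomp L M) (hT : IsNoetherianRing T) (hK : IsField ↥K)
    (Λ : Finset T) (hΛ : ∀ l ∈ L, l ∈ Submodule.span ↥K (Λ : Set T)) :
    IsNoetherian ↥(ringR K M) T := by
  classical
  rw [isNoetherian_def]
  intro N
  choose dl hdl dm hdm hdec using hLM.1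
  -- generators of the T-ideal generated by N, chosen inside N
  obtain ⟨G, hG⟩ := (isNoetherianRing_iff_ideal_fg T).mp hT (Ideal.span (N : Set T))
  have hGmem : ∀ g ∈ G, ∃ Sg : Finset T, ↑Sg ⊆ (N : Set T) ∧ g ∈ Ideal.span (↑Sg : Set T) := by
    intro g hg
    have hg' : g ∈ Ideal.span (N : Set T) := hG ▸ subset_span hg
    obtain ⟨Sg, h1, h2⟩ := Submodule.mem_span_finite_of_mem_span hg'
    exact ⟨Sg, h1, h2⟩
  choose f hf1 hf2 using hGmem
  set S : Finset T := G.attach.biUnion (fun g => f g.1 g.2) with hSdef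
  have hSN : (S : Set T) ⊆ (N : Set T) := by
    intro x hx
    rw [Finset.mem_coe, Finset.mem_biUnion] at hx
    obtain ⟨g, _, hxg⟩ := hx
    exact hf1 g.1 g.2 hxg
  have hNS : ∀ x ∈ N, x ∈ Ideal.span (↑S : Set T) := by
    intro x hx
    have hx1 : x ∈ Ideal.span (N : Set T) := subset_span hx
    rw [← hG] at hx1
    refine Ideal.span_le.mpr ?_ hx1
    intro g hg
    rw [Finset.mem_coe] at hg
    refine Ideal.span_le.mpr ?_ (hf2 g hg)
    intro y hy
    refine subset_span ?_
    rw [Finset.mem_coe, Finset.mem_biUnion]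
    exact ⟨⟨g, hg⟩, Finset.mem_attach _ _, hy⟩
  set B : Finset T := (Λ ×ˢ S).image (fun p => p.1 * p.2) with hBdef
  have hmulW : ∀ l ∈ Submodule.span ↥K (Λ : Set T), ∀ a ∈ S,
      l * a ∈ Submodule.span ↥K (B : Set T) := by
    intro l hl a ha
    induction hl using Submodule.span_induction with
    | mem y hy =>
      refine subset_span ?_
      rw [Finset.mem_coe, Finset.mem_image]
      exact ⟨(y, a), Finset.mem_product.mpr ⟨Finset.mem_coe.mp hy, ha⟩, rfl⟩
    | zero => rw [zero_mul]; exact zero_mem _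
    | add x y _ _ hx hy => rw [add_mul]; exact add_mem hx hy
    | smul k x _ hx => rw [smul_mul_assoc]; exact smul_mem _ _ hx
  have hclaim : ∀ x ∈ Ideal.span (↑S : Set T), ∃ w ∈ Submodule.span ↥K (B : Set T),
      x - w ∈ Submodule.span ↥(ringR K M) (↑S : Set T) := by
    intro x hx
    obtain ⟨c, -, hc⟩ := mem_span_finset.mp hx
    refine ⟨∑ a ∈ S, dl (c a) * a, ?_, ?_⟩
    · exact Submodule.sum_mem _ fun a ha => hmulW _ (hΛ _ (hdl _)) a ha
    · have hx2 : x - ∑ a ∈ S, dl (c a) * a = ∑ a ∈ S, dm (c a) * a := by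
        rw [← hc, ← Finset.sum_sub_distrib]
        refine Finset.sum_congr rfl fun a _ => ?_
        have hd := hdec (c a)
        simp only [smul_eq_mul]
        linear_combination a * hd
      rw [hx2]
      refine Submodule.sum_mem _ fun a ha => ?_
      have he : dm (c a) * a = (⟨dm (c a), M_le_ringR K M (hdm _)⟩ : ↥(ringR K M)) • a := rfl
      rw [he]
      exact Submodule.smul_mem _ _ (subset_span ha)
  letI : Field ↥K := hK.toField
  set W : Submodule ↥K T := Submodule.span ↥K (B : Set T) with hWdef
  let N' : Submodule ↥K T :=
    { carrier := N
      add_mem' := fun ha hb => N.add_mem ha hb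
      zero_mem' := N.zero_mem
      smul_mem' := fun k x hx => by
        have he : k • x = (⟨(k : T), K_le_ringR K M k.2⟩ : ↥(ringR K M)) • x := rfl
        show k • x ∈ (N : Set T)
        rw [he]
        exact N.smul_mem _ hx }
  haveI : IsNoetherian ↥K ↥W := isNoetherian_of_fg_of_noetherian W ⟨B, rfl⟩
  have hV : (N' ⊓ W).FG := by
    have h1 : ((N' ⊓ W).comap W.subtype).FG := IsNoetherian.noetherian _
    have h2 : ((N' ⊓ W).comap W.subtype).map W.subtype = N' ⊓ W := by
      rw [Submodule.map_comap_subtype]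
      exact inf_eq_right.mpr inf_le_right
    rw [← h2]; exact h1.map _
  obtain ⟨C, hC⟩ := hV
  refine ⟨S ∪ C, le_antisymm ?_ ?_⟩
  · rw [Submodule.span_le]
    intro x hx
    rw [Finset.coe_union, Set.mem_union] at hx
    rcases hx with hx | hx
    · exact hSN hx
    · have hxV : x ∈ N' ⊓ W := hC ▸ subset_span hx
      exact hxV.1
  · intro x hx
    obtain ⟨w, hw, hj⟩ := hclaim x (hNS x hx)
    have hspan : Submodule.span ↥(ringR K M) (↑S : Set T) ≤ N := Submodule.span_le.mpr hSN
    have hjN : x - w ∈ N := hspan hj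
    have hwN : w ∈ N := by
      have := N.sub_mem hx hjN
      simpa using this
    have hwV : w ∈ Submodule.span ↥K (C : Set T) := by
      rw [hC]; exact ⟨hwN, hw⟩
    have hwR : w ∈ Submodule.span ↥(ringR K M) (C : Set T) :=
      span_subring_mono (K_le_ringR K M) hwV
    have hx' : x = (x - w) + w := by ring
    rw [hx']
    have hsub1 : (S : Set T) ⊆ ↑(S ∪ C) := by rw [Finset.coe_union]; exact Set.subset_union_left
    have hsub2 : (C : Set T) ⊆ ↑(S ∪ C) := by rw [Finset.coe_union]; exact Set.subset_union_right
    exact add_mem (Submodule.span_mono hsub1 hj) (Submodule.span_mono hsub2 hwR)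
theorem noethRing_of_noeth (h : IsNoetherian ↥(ringR K M) T) : IsNoetherianRing ↥(ringR K M) := by
  rw [isNoetherianRing_iff]
  exact isNoetherian_of_injective
    (⟨⟨Subtype.val, fun _ _ => rfl⟩, fun _ _ => rfl⟩ : ↥(ringR K M) →ₗ[↥(ringR K M)] T) Subtype.val_injective

theorem finite_R_T (hLM : DirectSumDecomp L M) (Λ : Finset T)
    (hΛ : ∀ l ∈ L, l ∈ Submodule.span ↥K (Λ : Set T)) :
    Module.Finite ↥(ringR K M) T := by
  classical
  refine ⟨⟨insert 1 Λ, ?_⟩⟩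
  rw [eq_top_iff]
  intro t _
  obtain ⟨l, hl, m, hm, rfl⟩ := hLM.1 t
  have hsub : (Λ : Set T) ⊆ ↑(insert 1 Λ) := by
    rw [Finset.coe_insert]; exact Set.subset_insert _ _
  refine add_mem ?_ ?_
  · exact Submodule.span_mono hsub (span_subring_mono (K_le_ringR K M) (hΛ l hl))
  · have h1 : (1 : T) ∈ Submodule.span ↥(ringR K M) (↑(insert 1 Λ) : Set T) :=
      Submodule.subset_span (by rw [Finset.coe_insert]; exact Set.mem_insert _ _)
    have he : m = (⟨m, M_le_ringR K M hm⟩ : ↥(ringR K M)) • (1 : T) := by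
      show m = m * 1; rw [mul_one]
    rw [he]
    exact Submodule.smul_mem _ _ h1

/-- The inclusion of `L` into `T` as a `K`-linear map (with the `modOfLE` structure). -/
noncomputable def inclKLin (hKL : K ≤ L) :
    letI := modOfLE hKL
    ↥L →ₗ[↥K] T :=
  letI := modOfLE hKL
  { toFun := Subtype.val
    map_add' := fun _ _ => rfl
    map_smul' := fun _ _ => rfl }

theorem finite_L_K (hKL : K ≤ L) (Λ : Finset T) (hΛL : (Λ : Set T) ⊆ (L : Set T))
    (hΛ : ∀ l ∈ L, l ∈ Submodule.span ↥K (Λ : Set T)) :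
    @Module.Finite ↥K ↥L _ _ (modOfLE hKL) := by
  classical
  letI := modOfLE hKL
  let f := inclKLin hKL
  have hfval : ∀ x : ↥L, f x = (x : T) := fun _ => rfl
  set s : Finset ↥L := Λ.attach.image (fun x => (⟨x.1, hΛL x.2⟩ : ↥L)) with hsdef
  have himg : f '' (s : Set ↥L) = (Λ : Set T) := by
    ext y
    constructor
    · rintro ⟨z, hz, rfl⟩
      rw [Finset.mem_coe, Finset.mem_image] at hz
      obtain ⟨a, _, rfl⟩ := hz
      exact a.2
    · intro hy
      refine ⟨⟨y, hΛL hy⟩, ?_, rfl⟩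
      rw [Finset.mem_coe, Finset.mem_image]
      exact ⟨⟨y, Finset.mem_coe.mp hy⟩, Finset.mem_attach _ _, rfl⟩
  refine ⟨⟨s, ?_⟩⟩
  rw [eq_top_iff]
  intro x _
  have hx : f x ∈ Submodule.span ↥K (f '' (s : Set ↥L)) := by
    rw [himg]; exact hΛ _ x.2
  rw [← Submodule.map_span] at hx
  obtain ⟨y, hy, hyx⟩ := hx
  have : y = x := Subtype.val_injective hyx
  rwa [← this]

theorem exists_span_of_finite (hKL : K ≤ L)
    (hfin : @Module.Finite ↥K ↥L _ _ (modOfLE hKL)) :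
    ∃ Λ : Finset T, (Λ : Set T) ⊆ (L : Set T) ∧
      ∀ l ∈ L, l ∈ Submodule.span ↥K (Λ : Set T) := by
  classical
  letI := modOfLE hKL
  obtain ⟨s, hs⟩ := hfin.fg_top
  let f := inclKLin hKL
  refine ⟨s.image Subtype.val, ?_, ?_⟩
  · intro x hx
    rw [Finset.coe_image] at hx
    obtain ⟨a, _, rfl⟩ := hx
    exact a.2
  · intro l hl
    have hx : (⟨l, hl⟩ : ↥L) ∈ Submodule.span ↥K (s : Set ↥L) := by
      rw [hs]; trivial
    have hmap : f ⟨l, hl⟩ ∈ Submodule.span ↥K (f '' (s : Set ↥L)) := by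
      rw [← Submodule.map_span]
      exact Submodule.mem_map_of_mem hx
    have himg : f '' (s : Set ↥L) = ↑(s.image Subtype.val) := by
      rw [Finset.coe_image]; rfl
    rwa [himg] at hmap

theorem isField_K (hL : IsFieldSub L) (hM0 : M ≠ ⊥) (hLM : DirectSumDecomp L M)
    (hKL : K ≤ L) (hR : IsNoetherianRing ↥(ringR K M)) : IsField ↥K := by
  obtain ⟨m, hmM, hm0⟩ := Submodule.exists_mem_ne_zero_of_ne_bot hM0
  refine ⟨⟨0, 1, fun h => zero_ne_one (congrArg Subtype.val h)⟩, mul_comm, ?_⟩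
  intro k hk
  have hk0 : (k : T) ≠ 0 := fun h => hk (Subtype.val_injective h)
  obtain ⟨y, hyL, hky⟩ := hL k (hKL k.2) hk0
  have hy0 : y ≠ 0 := by
    intro h; rw [h, mul_zero] at hky; exact zero_ne_one hky
  have hyk : y * (k : T) = 1 := by rw [mul_comm]; exact hky
  have heM : ∀ n : ℕ, y ^ n * m ∈ M := fun n => M.mul_mem_left _ hmM
  have hstep : ∀ n : ℕ,
      (Ideal.span {(⟨y ^ n * m, M_le_ringR K M (heM n)⟩ : ↥(ringR K M))} : Ideal ↥(ringR K M)) ≤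
      Ideal.span {(⟨y ^ (n + 1) * m, M_le_ringR K M (heM (n + 1))⟩ : ↥(ringR K M))} := by
    intro n
    rw [Ideal.span_singleton_le_span_singleton]
    refine ⟨⟨(k : T), K_le_ringR K M k.2⟩, ?_⟩
    apply Subtype.val_injective
    show y ^ n * m = y ^ (n + 1) * m * (k : T)
    have : y ^ (n + 1) * m * (k : T) = (y * (k : T)) * (y ^ n * m) := by ring
    rw [this, hyk, one_mul]
  let g : ℕ →o Ideal ↥(ringR K M) :=
    ⟨fun n => Ideal.span {(⟨y ^ n * m, M_le_ringR K M (heM n)⟩ : ↥(ringR K M))},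
      monotone_nat_of_le_succ hstep⟩
  obtain ⟨n, hn⟩ := (monotone_stabilizes_iff_noetherian.mpr (isNoetherianRing_iff.mp hR)) g
  have hmem : (⟨y ^ (n + 1) * m, M_le_ringR K M (heM (n + 1))⟩ : ↥(ringR K M)) ∈ g n := by
    rw [hn (n + 1) (Nat.le_succ n)]
    exact Ideal.subset_span rfl
  obtain ⟨r, hr⟩ := Ideal.mem_span_singleton'.mp hmem
  have hrT : (r : T) * (y ^ n * m) = y ^ (n + 1) * m := congrArg Subtype.val hr
  have hyn0 : y ^ n * m ≠ 0 := mul_ne_zero (pow_ne_zero _ hy0) hm0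
  have hry : (r : T) = y := by
    have h1 : ((r : T) - y) * (y ^ n * m) = 0 := by
      rw [sub_mul, hrT]; ring
    rcases mul_eq_zero.mp h1 with h | h
    · exact sub_eq_zero.mp h
    · exact absurd h hyn0
  obtain ⟨κ, hκ, μ, hμ, hyd⟩ := r.2
  have hyκ : y = κ := by
    refine decompL_unique hLM hyL (hKL hκ) M.zero_mem hμ ?_
    rw [add_zero, ← hry, hyd]
  have hyK : y ∈ K := hyκ ▸ hκ
  exact ⟨⟨y, hyK⟩, Subtype.val_injective hky⟩

theorem exists_spanning (hLM : DirectSumDecomp L M) (hKL : K ≤ L) (hM0 : M ≠ ⊥)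
    (hR : IsNoetherianRing ↥(ringR K M)) :
    ∃ Λ : Finset T, (Λ : Set T) ⊆ (L : Set T) ∧
      ∀ l ∈ L, l ∈ Submodule.span ↥K (Λ : Set T) := by
  classical
  obtain ⟨m, hmM, hm0⟩ := Submodule.exists_mem_ne_zero_of_ne_bot hM0
  choose dl hdl dm hdm hdec using hLM.1
  have hdlK : ∀ r : T, r ∈ ringR K M → dl r ∈ K := by
    rintro r ⟨κ, hκ, μ, hμ, hrd⟩
    have : dl r = κ := decompL_unique hLM (hdl r) (hKL hκ) (hdm r) hμ (by rw [← hdec r, ← hrd])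
    exact this ▸ hκ
  let A : Ideal ↥(ringR K M) :=
    { carrier := {r | ∃ t, (r : T) = m * t}
      add_mem' := by
        rintro a b ⟨t1, h1⟩ ⟨t2, h2⟩
        exact ⟨t1 + t2, by push_cast [h1, h2]; ring⟩
      zero_mem' := ⟨0, by simp⟩
      smul_mem' := by
        rintro c r ⟨t, h⟩
        refine ⟨(c : T) * t, ?_⟩
        have he : ((c • r : ↥(ringR K M)) : T) = (c : T) * (r : T) := rfl
        rw [he, h]; ring }
  obtain ⟨s, hs⟩ := (isNoetherianRing_iff_ideal_fg _).mp hR A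
  have hwit : ∀ a : ↥(ringR K M), a ∈ A → ∃ t, (a : T) = m * t := fun a ha => ha
  set w : ↥(ringR K M) → T := fun a =>
    if h : ∃ t, (a : T) = m * t then h.choose else 0 with hwdef
  have hw : ∀ a ∈ A, (a : T) = m * w a := by
    intro a ha
    have h : ∃ t, (a : T) = m * t := ha
    simp only [hwdef, dif_pos h]
    exact h.choose_spec
  set Λ : Finset T := s.image (fun a => dl (w a)) with hΛdef
  refine ⟨Λ, ?_, ?_⟩
  · intro x hx
    rw [Finset.coe_image] at hx
    obtain ⟨a, _, rfl⟩ := hx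
    exact hdl _
  · intro l hl
    have hmlA : (⟨m * l, M_le_ringR K M (M.mul_mem_right l hmM)⟩ : ↥(ringR K M)) ∈ A := ⟨l, rfl⟩
    rw [← hs] at hmlA
    obtain ⟨c, -, hc⟩ := mem_span_finset.mp hmlA
    have hsA : ∀ a ∈ s, (a : ↥(ringR K M)) ∈ A := fun a ha => hs ▸ Ideal.subset_span ha
    have hcT : ∑ a ∈ s, (c a : T) * (a : T) = m * l := by
      have h0 := congrArg Subtype.val hc
      simpa using h0
    have hsum : m * l = m * ∑ a ∈ s, (c a : T) * w a := by
      rw [Finset.mul_sum, ← hcT]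
      refine Finset.sum_congr rfl fun a ha => ?_
      rw [hw a (hsA a ha)]; ring
    have hl2 : l = ∑ a ∈ s, (c a : T) * w a := mul_left_cancel₀ hm0 hsum
    have hterm : ∀ a ∈ s, (c a : T) * w a - dl (c a) * dl (w a) ∈ M := by
      intro a ha
      have h1 : (c a : T) * w a - dl (c a) * dl (w a)
          = dl (c a) * dm (w a) + dm (c a) * w a := by
        have e1 := hdec (c a : T)
        have e2 := hdec (w a)
        linear_combination (w a) * e1 + (dl (c a : T)) * e2
      rw [h1]
      exact M.add_mem (M.mul_mem_left _ (hdm _)) (Ideal.mul_mem_right _ _ (hdm _))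
    have hLsum : ∑ a ∈ s, dl (c a : T) * dl (w a) ∈ L :=
      L.sum_mem fun a _ => L.mul_mem (hKL (hdlK _ (c a).2)) (hdl _)
    have hmain : l = ∑ a ∈ s, dl (c a : T) * dl (w a) := by
      refine decompL_unique hLM hl hLsum M.zero_mem
        (M.sum_mem fun a ha => hterm a ha) ?_
      rw [add_zero, hl2, ← Finset.sum_add_distrib]
      refine Finset.sum_congr rfl fun a _ => by ring
    rw [hmain]
    refine Submodule.sum_mem _ fun a ha => ?_
    have he : dl (c a : T) * dl (w a)
        = (⟨dl (c a : T), hdlK _ (c a).2⟩ : ↥K) • dl (w a) := rfl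
    rw [he]
    exact Submodule.smul_mem _ _ (Submodule.subset_span (by
      rw [Finset.mem_coe, hΛdef, Finset.mem_image]
      exact ⟨a, ha, rfl⟩))
end Proof

theorem stmt_9 {T : Type*} [CommRing T] [IsDomain T]
    (L : Subring T) (M : Ideal T) (K : Subring T)
    (hL : IsFieldSub L) (hM : M.IsMaximal) (hM0 : M ≠ ⊥)
    (hLM : DirectSumDecomp L M) (hKL : K ≤ L) (hKne : K ≠ L) :
    IsNoetherianRing ↥(ringR K M) ↔
      (IsNoetherianRing T ∧ IsField ↥K ∧ @Module.Finite ↥K ↥L _ _ (modOfLE hKL)) := by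
  constructor
  · intro hR
    have hK : IsField ↥K := isField_K hL hM0 hLM hKL hR
    obtain ⟨Λ, hΛL, hΛ⟩ := exists_spanning hLM hKL hM0 hR
    refine ⟨?_, hK, finite_L_K hKL Λ hΛL hΛ⟩
    haveI : Module.Finite ↥(ringR K M) T := finite_R_T hLM Λ hΛ
    haveI := hR
    haveI h1 : IsNoetherian ↥(ringR K M) T :=
      isNoetherian_of_isNoetherianRing_of_finite ↥(ringR K M) T
    exact isNoetherianRing_iff.mpr (isNoetherian_of_tower ↥(ringR K M) (inferInstance))
  · rintro ⟨hT, hK, hfin⟩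
    obtain ⟨Λ, hΛL, hΛ⟩ := exists_span_of_finite hKL hfin
    exact noethRing_of_noeth (key_noetherian hLM hT hK Λ hΛ)
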